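/- For any k-by-k reciprocal matrix B, there exists a positive diagonal matrix D such that the all-ones vector e_k is efficient for DBD⁻¹ and DBD⁻¹ is well-behaved. (Concretely, one may take D⁻¹ = diag of any fixed column of B, so that DBD⁻¹ has a row and a column consisting entirely of ones.) -/
import Mathlib


open Matrix BigOperators Finset

/-- A positive square matrix is reciprocal if `A j i = 1 / A i j` for all `i, j`. -/
def IsReciprocal {n : ℕ} (A : Matrix (Fin n) (Fin n) ℝ) : Prop :=
  (∀ i j, 0 < A i j) ∧ ∀ i j, A j i = 1 / A i j

/-- A reciprocal matrix is consistent if `A i j * A j k = A i k` for all `i, j, k`. -/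
def IsConsistent {n : ℕ} (A : Matrix (Fin n) (Fin n) ℝ) : Prop :=
  IsReciprocal A ∧ ∀ i j k, A i j * A j k = A i k

/-- A vector is positive if all its entries are positive. -/
def PosVec {n : ℕ} (w : Fin n → ℝ) : Prop := ∀ i, 0 < w i

/-- A positive vector `w` is efficient for `A` if any positive vector `v` whose associated
consistent matrix approximates `A` at least as well as that of `w` (entrywise) is a positive
multiple of `w`. -/
def IsEfficient {n : ℕ} (A : Matrix (Fin n) (Fin n) ℝ) (w : Fin n → ℝ) : Prop :=
  PosVec w ∧ ∀ v : Fin n → ℝ, PosVec v →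
    (∀ i j, |A i j - v i / v j| ≤ |A i j - w i / w j|) →
    ∃ c : ℝ, 0 < c ∧ v = c • w

/-- The `i`-th row sum of a matrix. -/
noncomputable def rowSum {n : ℕ} (A : Matrix (Fin n) (Fin n) ℝ) (i : Fin n) : ℝ := ∑ j, A i j

/-- Given the row sums `r` in nonincreasing order (`r 0` the largest), the auxiliary function
`f(x) = 1/x + ∑_{i=2}^{k} 1/(r₁ - rᵢ + x) + 1 - r₁ - x` (note the `i = 1` term of the sum is
`1/x` since `r 0 - r 0 = 0`). -/
noncomputable def auxF {k : ℕ} (r : Fin (k + 1) → ℝ) (x : ℝ) : ℝ :=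
  (∑ i, 1 / (r 0 - r i + x)) + 1 - r 0 - x

/-- A reciprocal matrix `B` is well-behaved if, with row sums `r₁ ≥ ⋯ ≥ r_k`, either
`r₁ - r_k ≥ 1` (type I), or `r₁ - r_k < 1` and `f(1 + r_k - r₁) ≥ 0` (type II). -/
def WellBehaved {k : ℕ} (B : Matrix (Fin (k + 1)) (Fin (k + 1)) ℝ) : Prop :=
  ∃ σ : Equiv.Perm (Fin (k + 1)), Antitone (rowSum B ∘ σ) ∧
    (1 ≤ rowSum B (σ 0) - rowSum B (σ (Fin.last k)) ∨
      (rowSum B (σ 0) - rowSum B (σ (Fin.last k)) < 1 ∧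
        0 ≤ auxF (rowSum B ∘ σ) (1 + rowSum B (σ (Fin.last k)) - rowSum B (σ 0))))

/-- For any reciprocal matrix `B` there is a positive diagonal matrix `D = diag d` such that
the all-ones vector is efficient for `D B D⁻¹` and `D B D⁻¹` is well-behaved. -/
theorem stmt19 {k : ℕ} (B : Matrix (Fin (k + 1)) (Fin (k + 1)) ℝ) (hB : IsReciprocal B) :
    ∃ d : Fin (k + 1) → ℝ, (∀ i, 0 < d i) ∧
      IsEfficient (Matrix.of fun i j => d i * B i j / d j) (fun _ => 1) ∧
      WellBehaved (Matrix.of fun i j => d i * B i j / d j) := by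
  obtain ⟨hpos, hrec⟩ := hB
  have hB00 : B 0 0 = 1 := by
    have h := hrec 0 0
    have := hpos 0 0
    field_simp at h
    nlinarith
  refine ⟨fun i => 1 / B i 0, fun i => one_div_pos.mpr (hpos i 0), ?_, ?_⟩
  · -- efficiency
    refine ⟨fun _ => one_pos, fun v hv hle => ⟨v 0, hv 0, funext fun i => ?_⟩⟩
    have hCi0 : (1 / B i 0) * B i 0 / (1 / B 0 0) = 1 := by
      rw [hB00]
      field_simp [(hpos i 0).ne']
    have h := hle i 0
    simp only [Matrix.of_apply, hCi0, div_one] at h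
    have hvi : v i / v 0 = 1 := by
      have : |1 - v i / v 0| ≤ 0 := by simpa using h
      have h0 : 1 - v i / v 0 = 0 :=
        abs_eq_zero.mp (le_antisymm this (abs_nonneg _))
      linarith
    have : v i = v 0 := by
      field_simp [(hv 0).ne'] at hvi
      linarith
    simp [this]
  · -- well-behaved
    set C : Matrix (Fin (k + 1)) (Fin (k + 1)) ℝ :=
      Matrix.of fun i j => (fun i => 1 / B i 0) i * B i j / (fun i => 1 / B i 0) j with hC
    have hC0 : ∀ j, C 0 j = 1 := by
      intro j
      have hj := hrec 0 j
      simp only [hC, Matrix.of_apply, hB00, hj]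
      field_simp [(hpos 0 j).ne']
    have hr0 : rowSum C 0 = (k + 1 : ℝ) := by
      simp [rowSum, hC0]
    set σ : Equiv.Perm (Fin (k + 1)) := Tuple.sort (fun i => -rowSum C i) with hσ
    have hmono := Tuple.monotone_sort (fun i => -rowSum C i)
    have hanti : Antitone (rowSum C ∘ σ) := by
      intro a b hab
      have := hmono hab
      simpa using this
    have hmax : ∀ i, rowSum C i ≤ rowSum C (σ 0) := by
      intro i
      have : rowSum C (σ (σ.symm i)) ≤ rowSum C (σ 0) := hanti (Fin.zero_le _)
      simpa using this
    have hmin : ∀ i, rowSum C (σ (Fin.last k)) ≤ rowSum C i := by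
      intro i
      have : rowSum C (σ (Fin.last k)) ≤ rowSum C (σ (σ.symm i)) := hanti (Fin.le_last _)
      simpa using this
    refine ⟨σ, hanti, ?_⟩
    by_cases hcase : 1 ≤ rowSum C (σ 0) - rowSum C (σ (Fin.last k))
    · exact Or.inl hcase
    · push_neg at hcase
      refine Or.inr ⟨hcase, ?_⟩
      set M := rowSum C (σ 0) with hM
      set m := rowSum C (σ (Fin.last k)) with hm
      have hx : 0 < 1 + m - M := by linarith
      have hmle : m ≤ (k + 1 : ℝ) := hr0 ▸ hmin 0
      have hterm : ∀ i : Fin (k + 1),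
          (1 : ℝ) ≤ 1 / (M - rowSum C (σ i) + (1 + m - M)) := by
        intro i
        have h1 : rowSum C (σ i) ≤ M := hmax (σ i)
        have h2 : m ≤ rowSum C (σ i) := hmin (σ i)
        have hd : 0 < M - rowSum C (σ i) + (1 + m - M) := by linarith
        rw [le_div_iff₀ hd]
        linarith
      have hsum : (k + 1 : ℝ) ≤ ∑ i : Fin (k + 1),
          1 / (M - rowSum C (σ i) + (1 + m - M)) := by
        calc (k + 1 : ℝ) = ∑ _i : Fin (k + 1), (1 : ℝ) := by simp
          _ ≤ _ := Finset.sum_le_sum fun i _ => hterm i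
      unfold auxF
      simp only [Function.comp_apply, ← hM]
      linarith [hsum]
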